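/- Let x₁* = (-r, 0, …, 0), x₂* = (r, 0, …, 0) in ℝⁿ (n ≥ 2), σ₁, σ₂, L > 0 with r = (L/2)(1/σ₁ + 1/σ₂), and let M be the set of all x ∈ ℝⁿ for which there exist differentiable σ₁- and σ₂-strongly convex f₁, f₂ with minimizers x₁*, x₂* such that ∇f₁(x) = -∇f₂(x) and ‖∇f₁(x)‖ ≤ L. Then M = {((L/2)(1/σ₁ - 1/σ₂), 0, …, 0)}, the unique point of tangency of the closed balls B̄(x₁*, L/σ₁) and B̄(x₂*, L/σ₂). -/

import Mathlib

/-- A differentiable function `f : ℝⁿ → ℝ` is `σ`-strongly convex if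
`⟨∇f(x) - ∇f(y), x - y⟩ ≥ σ‖x - y‖²` for all `x, y`. -/
def StronglyConvex {n : ℕ} (σ : ℝ) (f : EuclideanSpace ℝ (Fin n) → ℝ) : Prop :=
  ∀ x y : EuclideanSpace ℝ (Fin n),
    σ * ‖x - y‖ ^ 2 ≤ (inner ℝ (gradient f x - gradient f y) (x - y) : ℝ)

namespace Stmt17Aux

variable {m : ℕ}

lemma single_smul (c a : ℝ) (i : Fin m) :
    c • EuclideanSpace.single i a = EuclideanSpace.single i (c * a) := by
  ext j
  by_cases h : j = i <;> simp [EuclideanSpace.single_apply, h]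

lemma single_sub (a b : ℝ) (i : Fin m) :
    EuclideanSpace.single i a - EuclideanSpace.single i b
      = EuclideanSpace.single i (a - b) := by
  ext j
  by_cases h : j = i <;> simp [EuclideanSpace.single_apply, h]

lemma single_add (a b : ℝ) (i : Fin m) :
    EuclideanSpace.single i a + EuclideanSpace.single i b
      = EuclideanSpace.single i (a + b) := by
  ext j
  by_cases h : j = i <;> simp [EuclideanSpace.single_apply, h]

lemma single_neg (a : ℝ) (i : Fin m) :
    -EuclideanSpace.single i a = EuclideanSpace.single i (-a) := by
  ext j
  by_cases h : j = i <;> simp [EuclideanSpace.single_apply, h]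

lemma hasGradientAt_quad (σ : ℝ) (c x : EuclideanSpace ℝ (Fin m)) :
    HasGradientAt (fun y => σ / 2 * ‖y - c‖ ^ 2) (σ • (x - c)) x := by
  rw [hasGradientAt_iff_hasFDerivAt]
  have h : HasFDerivAt (fun y : EuclideanSpace ℝ (Fin m) => y - c)
      (ContinuousLinearMap.id ℝ _) x := (hasFDerivAt_id x).sub_const c
  have h2 := h.norm_sq
  have h3 := h2.const_mul (σ / 2)
  convert h3 using 1
  · rfl
  ext w
  simp [InnerProductSpace.toDual_apply_apply, real_inner_smul_left]
  ring

lemma gradient_quad (σ : ℝ) (c : EuclideanSpace ℝ (Fin m)) :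
    gradient (fun y => σ / 2 * ‖y - c‖ ^ 2) = fun x => σ • (x - c) :=
  gradient_eq (fun x => hasGradientAt_quad σ c x)

lemma gradient_quad' (σ : ℝ) (c x : EuclideanSpace ℝ (Fin m)) :
    gradient (fun y => σ / 2 * ‖y - c‖ ^ 2) x = σ • (x - c) :=
  (hasGradientAt_quad σ c x).gradient

lemma quad_stronglyConvex (σ : ℝ) (c : EuclideanSpace ℝ (Fin m)) :
    StronglyConvex σ (fun y => σ / 2 * ‖y - c‖ ^ 2) := by
  intro x y
  rw [gradient_quad]
  have : σ • (x - c) - σ • (y - c) = σ • (x - y) := by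
    rw [← smul_sub]; congr 1; abel
  rw [this, real_inner_smul_left, real_inner_self_eq_norm_sq]

lemma gradient_eq_zero_of_min {f : EuclideanSpace ℝ (Fin m) → ℝ}
    (c : EuclideanSpace ℝ (Fin m)) (h : ∀ y, f c ≤ f y) : gradient f c = 0 := by
  have hmin : IsLocalMin f c := Filter.Eventually.of_forall h
  have := hmin.fderiv_eq_zero
  rw [gradient, this, map_zero]

lemma alg1 (σ₁ σ₂ L r : ℝ) (h1 : σ₁ ≠ 0) (h2 : σ₂ ≠ 0)
    (hrdef : r = L / 2 * (1 / σ₁ + 1 / σ₂)) :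
    σ₁ * (L / 2 * (1 / σ₁ - 1 / σ₂) - -r) = L := by
  rw [hrdef]; field_simp; ring

lemma alg2 (σ₁ σ₂ L r : ℝ) (h1 : σ₁ ≠ 0) (h2 : σ₂ ≠ 0)
    (hrdef : r = L / 2 * (1 / σ₁ + 1 / σ₂)) :
    σ₁ * (L / 2 * (1 / σ₁ - 1 / σ₂) - -r) = -(σ₂ * (L / 2 * (1 / σ₁ - 1 / σ₂) - r)) := by
  rw [hrdef]; field_simp; ring

end Stmt17Aux

/-- Let `x₁* = (-r,0,…,0)`, `x₂* = (r,0,…,0)` in `ℝⁿ` (`n ≥ 2`; here the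
dimension is `n + 2`), `σ₁, σ₂, L > 0` with `r = (L/2)(1/σ₁ + 1/σ₂)`, and let `M` be the
set of all `x ∈ ℝⁿ` admitting differentiable `σ₁`- and `σ₂`-strongly convex `f₁, f₂` with
minimizers `x₁*, x₂*` such that `∇f₁(x) = -∇f₂(x)` and `‖∇f₁(x)‖ ≤ L`.  Then
`M = {((L/2)(1/σ₁ - 1/σ₂), 0, …, 0)}`, the tangency point of the two closed balls. -/
theorem stmt_17 {n : ℕ} (r σ₁ σ₂ L : ℝ) (h1 : 0 < σ₁) (h2 : 0 < σ₂) (hL : 0 < L)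
    (hrdef : r = L / 2 * (1 / σ₁ + 1 / σ₂))
    (x₁s x₂s : EuclideanSpace ℝ (Fin (n + 2)))
    (hx1 : x₁s = EuclideanSpace.single 0 (-r)) (hx2 : x₂s = EuclideanSpace.single 0 r) :
    {x : EuclideanSpace ℝ (Fin (n + 2)) |
      ∃ f₁ f₂ : EuclideanSpace ℝ (Fin (n + 2)) → ℝ,
        Differentiable ℝ f₁ ∧ Differentiable ℝ f₂ ∧
        StronglyConvex σ₁ f₁ ∧ StronglyConvex σ₂ f₂ ∧
        (∀ y, f₁ x₁s ≤ f₁ y) ∧ (∀ y, f₂ x₂s ≤ f₂ y) ∧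
        gradient f₁ x = -gradient f₂ x ∧ ‖gradient f₁ x‖ ≤ L} =
      {EuclideanSpace.single 0 (L / 2 * (1 / σ₁ - 1 / σ₂))} := by
  classical
  set t : ℝ := L / 2 * (1 / σ₁ - 1 / σ₂) with ht
  set e : EuclideanSpace ℝ (Fin (n + 2)) := EuclideanSpace.single 0 (1 : ℝ) with he
  have hne : ‖e‖ = 1 := by rw [he, EuclideanSpace.norm_single]; norm_num
  set α : ℝ := L / σ₁ with hα
  set β : ℝ := L / σ₂ with hβ
  have hα0 : σ₁ * α = L := by rw [hα]; field_simp [h1.ne']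
  have hβ0 : σ₂ * β = L := by rw [hβ]; field_simp [h2.ne']
  have h2r : 2 * r = α + β := by rw [hrdef, hα, hβ]; field_simp
  ext x
  simp only [Set.mem_setOf_eq, Set.mem_singleton_iff]
  constructor
  · rintro ⟨f₁, f₂, hd₁, hd₂, hs₁, hs₂, hm₁, hm₂, hgrad, hnorm⟩
    set g : EuclideanSpace ℝ (Fin (n + 2)) := gradient f₁ x with hg
    set u : EuclideanSpace ℝ (Fin (n + 2)) := x - x₁s with hu
    set v : EuclideanSpace ℝ (Fin (n + 2)) := x - x₂s with hv
    have hz₁ : gradient f₁ x₁s = 0 := Stmt17Aux.gradient_eq_zero_of_min x₁s hm₁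
    have hz₂ : gradient f₂ x₂s = 0 := Stmt17Aux.gradient_eq_zero_of_min x₂s hm₂
    have hgu : σ₁ * ‖u‖ ^ 2 ≤ inner ℝ g u := by
      have := hs₁ x x₁s
      rwa [hz₁, sub_zero] at this
    have hgv : σ₂ * ‖v‖ ^ 2 ≤ inner ℝ (-g) v := by
      have hgrad' : gradient f₂ x = -g := by rw [hgrad, neg_neg]
      have := hs₂ x x₂s
      rwa [hz₂, sub_zero, hgrad'] at this
    have huv : u - v = (α + β) • e := by
      rw [hu, hv, sub_sub_sub_cancel_left, hx2, hx1, Stmt17Aux.single_sub, he,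
        Stmt17Aux.single_smul, mul_one]
      have : r - -r = α + β := by linarith
      rw [this]
    have hge : (inner ℝ g e : ℝ) ≤ L := by
      calc (inner ℝ g e : ℝ) ≤ ‖g‖ * ‖e‖ := real_inner_le_norm g e
      _ ≤ L := by rw [hne, mul_one]; exact hnorm
    -- inner ℝ product expansions
    have hαβpos : 0 < α + β := by positivity
    have key1 : (inner ℝ g u : ℝ) - inner ℝ g v ≤ (α + β) * L := by
      have : (inner ℝ g (u - v) : ℝ) = (α + β) * inner ℝ g e := by
        rw [huv, real_inner_smul_right]
      rw [inner_sub_right] at this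
      nlinarith [hge]
    have key2 : (inner ℝ u e : ℝ) - inner ℝ v e = α + β := by
      have : (inner ℝ (u - v) e : ℝ) = (α + β) * inner ℝ e e := by
        rw [huv, real_inner_smul_left]
      rw [inner_sub_left, real_inner_self_eq_norm_sq, hne] at this
      linarith [this]
    have hD1 : (0:ℝ) ≤ σ₁ * ‖u - α • e‖ ^ 2 := by positivity
    have hD2 : (0:ℝ) ≤ σ₂ * ‖v + β • e‖ ^ 2 := by positivity
    have expand1 : ‖u - α • e‖ ^ 2 = ‖u‖ ^ 2 - 2 * (α * inner ℝ u e) + α ^ 2 := by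
      rw [norm_sub_sq_real, real_inner_smul_right, norm_smul, mul_pow, hne]
      simp [Real.norm_eq_abs, sq_abs]
    have expand2 : ‖v + β • e‖ ^ 2 = ‖v‖ ^ 2 + 2 * (β * inner ℝ v e) + β ^ 2 := by
      rw [norm_add_sq_real, real_inner_smul_right, norm_smul, mul_pow, hne]
      simp [Real.norm_eq_abs, sq_abs]
    have hinner_negg : (inner ℝ (-g) v : ℝ) = -inner ℝ g v := by
      rw [inner_neg_left]
    rw [hinner_negg] at hgv
    have E1 : σ₁ * ‖u - α • e‖ ^ 2
        = σ₁ * ‖u‖ ^ 2 - 2 * L * (inner ℝ u e : ℝ) + L * α := by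
      rw [expand1, ← hα0]; ring
    have E2 : σ₂ * ‖v + β • e‖ ^ 2
        = σ₂ * ‖v‖ ^ 2 + 2 * L * (inner ℝ v e : ℝ) + L * β := by
      rw [expand2, ← hβ0]; ring
    have hsum : σ₁ * ‖u - α • e‖ ^ 2 + σ₂ * ‖v + β • e‖ ^ 2 ≤ 0 := by
      rw [E1, E2]
      have h3 : 2 * L * ((inner ℝ u e : ℝ) - inner ℝ v e) = 2 * L * (α + β) := by rw [key2]
      linarith [hgu, hgv, key1]
    have hle : ‖u - α • e‖ ^ 2 ≤ 0 := by
      have h' : σ₁ * ‖u - α • e‖ ^ 2 ≤ σ₁ * 0 := by rw [mul_zero]; linarith [hD2]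
      exact le_of_mul_le_mul_left h' h1
    have hu0 : ‖u - α • e‖ ^ 2 = 0 := le_antisymm hle (sq_nonneg _)
    have hu1 : u = α • e := by
      have := (pow_eq_zero_iff (two_ne_zero)).mp hu0
      rw [norm_eq_zero, sub_eq_zero] at this
      exact this
    have hx : x = x₁s + α • e := by rw [← hu1, hu]; abel
    rw [hx, hx1, he, Stmt17Aux.single_smul, mul_one, Stmt17Aux.single_add]
    have : -r + α = L / 2 * (1 / σ₁ - 1 / σ₂) := by
      rw [hα, hrdef]; field_simp; ring
    rw [this]
  · intro hx
    refine ⟨fun y => σ₁ / 2 * ‖y - x₁s‖ ^ 2, fun y => σ₂ / 2 * ‖y - x₂s‖ ^ 2, ?_, ?_, ?_, ?_, ?_, ?_, ?_, ?_⟩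
    · exact fun y => (Stmt17Aux.hasGradientAt_quad σ₁ x₁s y).differentiableAt
    · exact fun y => (Stmt17Aux.hasGradientAt_quad σ₂ x₂s y).differentiableAt
    · exact Stmt17Aux.quad_stronglyConvex σ₁ x₁s
    · exact Stmt17Aux.quad_stronglyConvex σ₂ x₂s
    · intro y; simp; positivity
    · intro y; simp; positivity
    · rw [Stmt17Aux.gradient_quad', Stmt17Aux.gradient_quad', hx, hx1, hx2,
        Stmt17Aux.single_sub, Stmt17Aux.single_sub, Stmt17Aux.single_smul,
        Stmt17Aux.single_smul, Stmt17Aux.single_neg]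
      rw [Stmt17Aux.alg2 σ₁ σ₂ L r h1.ne' h2.ne' hrdef]
    · rw [Stmt17Aux.gradient_quad', hx, hx1, Stmt17Aux.single_sub, Stmt17Aux.single_smul,
        EuclideanSpace.norm_single]
      rw [Stmt17Aux.alg1 σ₁ σ₂ L r h1.ne' h2.ne' hrdef, Real.norm_eq_abs, abs_of_pos hL]
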